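/- Let q ∈ ℝ with q ≠ 1, let k ≥ 1 and let x₁, …, x_k be reals. Write S₀ = 0 and S_j = x₁ + ⋯ + x_j, and assume 1 + (q−1)S_j > 0 for every j = 1, …, k. Then exp_q(S_k) = ∏_{j=1}^{k} exp_q( x_j / (1 + (q−1)S_{j−1}) ). -/

import Mathlib

/-- The q-exponential: for `q ≠ 1`, `exp_q z = (max(1 + (q-1)z, 0))^(1/(q-1))`. -/
noncomputable def qexp (q z : ℝ) : ℝ := (max (1 + (q - 1) * z) 0) ^ (1 / (q - 1))

/-- Weighted-average decomposition of the q-exponential of a sum: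
with partial sums `S_j = x₁ + ⋯ + x_j` (here `S j = ∑_{i < j} x i` with 0-based indexing,
so `Finset.range j` sums the first `j` terms), if `1 + (q−1)S_j > 0` for `j = 1, …, k`, then
`exp_q(S_k) = ∏_{j=1}^{k} exp_q( x_j / (1 + (q−1)S_{j−1}) )`. -/
theorem qexp_sum_weighted_prod (q : ℝ) (hq : q ≠ 1) (k : ℕ) (hk : 1 ≤ k) (x : ℕ → ℝ)
    (hS : ∀ j, 1 ≤ j → j ≤ k → 0 < 1 + (q - 1) * ∑ i ∈ Finset.range j, x i) :
    qexp q (∑ i ∈ Finset.range k, x i)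
      = ∏ j ∈ Finset.range k, qexp q (x j / (1 + (q - 1) * ∑ i ∈ Finset.range j, x i)) := by
  induction k, hk using Nat.le_induction with
  | base =>
    simp [qexp]
  | succ n hn ih =>
    rw [Finset.prod_range_succ, ← ih (fun j h1 h2 => hS j h1 (h2.trans (Nat.le_succ n)))]
    set S := ∑ i ∈ Finset.range n, x i with hSdef
    have hA : 0 < 1 + (q - 1) * S := hS n hn (Nat.le_succ n)
    have hB : 0 < 1 + (q - 1) * ∑ i ∈ Finset.range (n+1), x i :=
      hS (n+1) (by omega) le_rfl
    have key : 1 + (q - 1) * ∑ i ∈ Finset.range (n+1), x i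
        = (1 + (q - 1) * S) * (1 + (q - 1) * (x n / (1 + (q - 1) * S))) := by
      rw [Finset.sum_range_succ]
      field_simp
      ring
    have hC : 0 < 1 + (q - 1) * (x n / (1 + (q - 1) * S)) := by
      have h2 := key ▸ hB
      by_contra h
      push_neg at h
      nlinarith [mul_nonpos_of_nonneg_of_nonpos hA.le h]
    unfold qexp
    rw [max_eq_left hB.le, max_eq_left hA.le, max_eq_left hC.le, key,
      Real.mul_rpow hA.le hC.le]
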